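/- Let X, Y, Z be complex Banach spaces and let A : X → Y and B : Y → Z be bounded linear operators with B ∘ A = 0. Suppose ker(B)/range(A) is finite-dimensional and range(B) is closed in Z. Then range(B*) is closed in Y', range(B*) ⊆ ker(A*), and the quotient ker(A*)/range(B*) is finite-dimensional; moreover, if N is a finite-dimensional subspace of Y with range(A) ⊕ N = ker(B), then range(B*) = ker(A*) ∩ N^⊥, where N^⊥ = { g ∈ Y' : g vanishes on N }. -/

import Mathlib

/-- The dual (transpose) operator of a bounded linear operator `T : X → Y`,
sending a continuous linear functional `g` on `Y` to `g ∘ T`. -/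
noncomputable def dualOp {X Y : Type*} [NormedAddCommGroup X] [NormedSpace ℂ X]
    [NormedAddCommGroup Y] [NormedSpace ℂ Y] (T : X →L[ℂ] Y) :
    StrongDual ℂ Y →L[ℂ] StrongDual ℂ X :=
  (ContinuousLinearMap.compL ℂ X Y ℂ).flip T

open ContinuousLinearMap
set_option maxHeartbeats 1000000
set_option synthInstance.maxHeartbeats 400000

lemma dualOp_apply {X Y : Type*} [NormedAddCommGroup X] [NormedSpace ℂ X]
    [NormedAddCommGroup Y] [NormedSpace ℂ Y] (T : X →L[ℂ] Y) (g : StrongDual ℂ Y) :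
    dualOp T g = g.comp T := rfl

lemma key {Y Z : Type*} [NormedAddCommGroup Y] [NormedSpace ℂ Y] [CompleteSpace Y]
    [NormedAddCommGroup Z] [NormedSpace ℂ Z] [CompleteSpace Z]
    (B : Y →L[ℂ] Z) (hclosed : IsClosed (LinearMap.range (B : Y →ₗ[ℂ] Z) : Set Z))
    (g : StrongDual ℂ Y) (hg : ∀ y ∈ LinearMap.ker (B : Y →ₗ[ℂ] Z), g y = 0) :
    g ∈ LinearMap.range (dualOp B : StrongDual ℂ Z →ₗ[ℂ] StrongDual ℂ Y) := by
  haveI : CompleteSpace (LinearMap.range (B : Y →ₗ[ℂ] Z)) := hclosed.completeSpace_coe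
  set R := LinearMap.range (B : Y →ₗ[ℂ] Z) with hR
  let B' : Y →L[ℂ] R := B.codRestrict R (fun y => LinearMap.mem_range_self _ y)
  have hsurj : Function.Surjective B' := by
    rintro ⟨z, y, rfl⟩
    exact ⟨y, rfl⟩
  obtain ⟨C, Cpos, hC⟩ := ContinuousLinearMap.exists_preimage_norm_le B' hsurj
  -- lift g to the quotient
  let g' : (Y ⧸ LinearMap.ker (B : Y →ₗ[ℂ] Z)) →ₗ[ℂ] ℂ :=
    (LinearMap.ker (B : Y →ₗ[ℂ] Z)).liftQ (g : Y →ₗ[ℂ] ℂ) (fun y hy => hg y hy)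
  let e := LinearMap.quotKerEquivRange (B : Y →ₗ[ℂ] Z)
  let h₁ : LinearMap.range (B : Y →ₗ[ℂ] Z) →ₗ[ℂ] ℂ := g'.comp e.symm.toLinearMap
  have hmemrange : ∀ y : Y, B y ∈ LinearMap.range (B : Y →ₗ[ℂ] Z) :=
    fun y => LinearMap.mem_range_self _ y
  have h₁apply : ∀ y : Y, h₁ ⟨B y, hmemrange y⟩ = g y := by
    intro y
    show g' (e.symm ⟨B y, hmemrange y⟩) = g y
    erw [LinearMap.quotKerEquivRange_symm_apply_image]
    rfl
  have hbound : ∀ z : LinearMap.range (B : Y →ₗ[ℂ] Z), ‖h₁ z‖ ≤ (‖g‖ * C) * ‖z‖ := by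
    intro z
    obtain ⟨y, hy, hny⟩ := hC ⟨z.1, z.2⟩
    have hz : z = ⟨B y, hmemrange y⟩ := by
      ext
      exact (congrArg Subtype.val hy).symm
    have hz' : h₁ z = g y := by rw [hz]; exact h₁apply y
    have hnz : ‖(⟨z.1, z.2⟩ : R)‖ = ‖z‖ := rfl
    rw [hz']
    calc ‖g y‖ ≤ ‖g‖ * ‖y‖ := g.le_opNorm y
      _ ≤ ‖g‖ * (C * ‖z‖) := by
          rw [← hnz]; exact mul_le_mul_of_nonneg_left hny (norm_nonneg g)
      _ = (‖g‖ * C) * ‖z‖ := (mul_assoc _ _ _).symm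
  let h₂ : (LinearMap.range (B : Y →ₗ[ℂ] Z)) →L[ℂ] ℂ := h₁.mkContinuous _ hbound
  obtain ⟨h, hh, -⟩ := exists_extension_norm_eq (LinearMap.range (B : Y →ₗ[ℂ] Z)) h₂
  refine ⟨h, ?_⟩
  ext y
  have := hh ⟨B y, hmemrange y⟩
  rw [ContinuousLinearMap.coe_coe, dualOp_apply]
  simp only [ContinuousLinearMap.comp_apply]
  rw [show h (B y) = h₂ ⟨B y, hmemrange y⟩ from this]
  exact h₁apply y


/-- Let `X, Y, Z` be complex Banach spaces, `A : X → Y`, `B : Y → Z`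
bounded with `B ∘ A = 0`, `ker B / range A` finite-dimensional and `range B` closed. Then
`range B*` is closed, `range B* ⊆ ker A*`, the quotient `ker A* / range B*` is
finite-dimensional, and for every finite-dimensional subspace `N` of `Y` with
`range A ⊕ N = ker B` one has `range B* = ker A* ∩ N^⊥`. -/
theorem stmt14 (X Y Z : Type*) [NormedAddCommGroup X] [NormedSpace ℂ X] [CompleteSpace X]
    [NormedAddCommGroup Y] [NormedSpace ℂ Y] [CompleteSpace Y]
    [NormedAddCommGroup Z] [NormedSpace ℂ Z] [CompleteSpace Z]
    (A : X →L[ℂ] Y) (B : Y →L[ℂ] Z) (hBA : B.comp A = 0)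
    (hfin : FiniteDimensional ℂ
      (↥(LinearMap.ker (B : Y →ₗ[ℂ] Z)) ⧸
        Submodule.comap (LinearMap.ker (B : Y →ₗ[ℂ] Z)).subtype (LinearMap.range (A : X →ₗ[ℂ] Y))))
    (hclosed : IsClosed (LinearMap.range (B : Y →ₗ[ℂ] Z) : Set Z)) :
    IsClosed (LinearMap.range (dualOp B : StrongDual ℂ Z →ₗ[ℂ] StrongDual ℂ Y) : Set (StrongDual ℂ Y)) ∧
    LinearMap.range (dualOp B : StrongDual ℂ Z →ₗ[ℂ] StrongDual ℂ Y) ≤ LinearMap.ker (dualOp A : StrongDual ℂ Y →ₗ[ℂ] StrongDual ℂ X) ∧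
    FiniteDimensional ℂ
      (@HasQuotient.Quotient ↥(LinearMap.ker (dualOp A : StrongDual ℂ Y →ₗ[ℂ] StrongDual ℂ X))
        (Submodule ℂ ↥(LinearMap.ker (dualOp A : StrongDual ℂ Y →ₗ[ℂ] StrongDual ℂ X)))
        (@Submodule.hasQuotient ℂ ↥(LinearMap.ker (dualOp A : StrongDual ℂ Y →ₗ[ℂ] StrongDual ℂ X)) _
          (LinearMap.ker (dualOp A : StrongDual ℂ Y →ₗ[ℂ] StrongDual ℂ X)).addCommGroup _)
        (Submodule.comap (LinearMap.ker (dualOp A : StrongDual ℂ Y →ₗ[ℂ] StrongDual ℂ X)).subtype (LinearMap.range (dualOp B : StrongDual ℂ Z →ₗ[ℂ] StrongDual ℂ Y)))) ∧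
    ∀ N : Submodule ℂ Y, FiniteDimensional ℂ N →
      Disjoint (LinearMap.range (A : X →ₗ[ℂ] Y)) N → LinearMap.range (A : X →ₗ[ℂ] Y) ⊔ N = LinearMap.ker (B : Y →ₗ[ℂ] Z) →
      ∀ g : StrongDual ℂ Y,
        (g ∈ LinearMap.range (dualOp B : StrongDual ℂ Z →ₗ[ℂ] StrongDual ℂ Y) ↔
          g ∈ LinearMap.ker (dualOp A : StrongDual ℂ Y →ₗ[ℂ] StrongDual ℂ X) ∧ ∀ n ∈ N, g n = 0) := by
  -- range A ≤ ker B
  have hAB : LinearMap.range (A : X →ₗ[ℂ] Y) ≤ LinearMap.ker (B : Y →ₗ[ℂ] Z) := by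
    rintro _ ⟨x, rfl⟩
    have : (B.comp A) x = (0 : X →L[ℂ] Z) x := by rw [hBA]
    simpa using this
  -- characterization of range of B*
  have hchar : ∀ g : StrongDual ℂ Y,
      g ∈ LinearMap.range (dualOp B : StrongDual ℂ Z →ₗ[ℂ] StrongDual ℂ Y) ↔ ∀ y ∈ LinearMap.ker (B : Y →ₗ[ℂ] Z), g y = 0 := by
    intro g
    constructor
    · rintro ⟨h, rfl⟩ y hy
      rw [LinearMap.mem_ker, ContinuousLinearMap.coe_coe] at hy
      rw [ContinuousLinearMap.coe_coe, dualOp_apply]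
      simp [hy]
    · exact key B hclosed g
  -- characterization of kernel of A*
  have hkerA : ∀ g : StrongDual ℂ Y,
      g ∈ LinearMap.ker (dualOp A : StrongDual ℂ Y →ₗ[ℂ] StrongDual ℂ X) ↔ ∀ x : X, g (A x) = 0 := by
    intro g
    rw [LinearMap.mem_ker, ContinuousLinearMap.coe_coe, dualOp_apply]
    constructor
    · intro h x
      have : (g.comp A) x = (0 : X →L[ℂ] ℂ) x := by rw [h]
      simpa using this
    · intro h
      ext x
      simpa using h x
  -- closedness
  have hclosed' : IsClosed (LinearMap.range (dualOp B : StrongDual ℂ Z →ₗ[ℂ] StrongDual ℂ Y) : Set (StrongDual ℂ Y)) := by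
    have : (LinearMap.range (dualOp B : StrongDual ℂ Z →ₗ[ℂ] StrongDual ℂ Y) : Set (StrongDual ℂ Y)) =
        ⋂ y : LinearMap.ker (B : Y →ₗ[ℂ] Z), {g : StrongDual ℂ Y | g (y : Y) = 0} := by
      ext g
      simp only [Set.mem_iInter, Set.mem_setOf_eq, SetLike.mem_coe]
      rw [hchar g]
      exact ⟨fun h y => h y y.2, fun h y hy => h ⟨y, hy⟩⟩
    rw [this]
    refine isClosed_iInter fun y => ?_
    exact isClosed_eq ((ContinuousLinearMap.apply ℂ ℂ (y : Y)).continuous) continuous_const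
  -- inclusion
  have hsub : LinearMap.range (dualOp B : StrongDual ℂ Z →ₗ[ℂ] StrongDual ℂ Y) ≤ LinearMap.ker (dualOp A : StrongDual ℂ Y →ₗ[ℂ] StrongDual ℂ X) := by
    intro g hg
    rw [hkerA]
    intro x
    exact (hchar g).1 hg (A x) (hAB (LinearMap.mem_range_self _ x))
  -- part 4 statement (for arbitrary suitable N)
  have hpart4 : ∀ N : Submodule ℂ Y, LinearMap.range (A : X →ₗ[ℂ] Y) ⊔ N = LinearMap.ker (B : Y →ₗ[ℂ] Z) →
      ∀ g : StrongDual ℂ Y,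
        (g ∈ LinearMap.range (dualOp B : StrongDual ℂ Z →ₗ[ℂ] StrongDual ℂ Y) ↔
          g ∈ LinearMap.ker (dualOp A : StrongDual ℂ Y →ₗ[ℂ] StrongDual ℂ X) ∧ ∀ n ∈ N, g n = 0) := by
    intro N hsup g
    rw [hchar g]
    constructor
    · intro h
      refine ⟨(hkerA g).2 fun x => h _ (hAB (LinearMap.mem_range_self _ x)), fun n hn => ?_⟩
      exact h n (hsup ▸ le_sup_right (α := Submodule ℂ Y) hn)
    · rintro ⟨hgA, hgN⟩ y hy
      rw [← hsup] at hy
      obtain ⟨a, ha, n, hn, rfl⟩ := Submodule.mem_sup.1 hy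
      obtain ⟨x, rfl⟩ := ha
      have h1 : g (A x) = 0 := (hkerA g).1 hgA x
      have h2 : g n = 0 := hgN n hn
      rw [map_add, ContinuousLinearMap.coe_coe, h1, h2, add_zero]
  -- construct a complement N
  set K := LinearMap.ker (B : Y →ₗ[ℂ] Z) with hK
  set R' := Submodule.comap K.subtype (LinearMap.range (A : X →ₗ[ℂ] Y)) with hR'
  obtain ⟨N', hN'⟩ := Submodule.exists_isCompl R'
  haveI := hfin
  haveI : FiniteDimensional ℂ N' :=
    LinearEquiv.finiteDimensional (Submodule.quotientEquivOfIsCompl R' N' hN')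
  set N := N'.map K.subtype with hN
  haveI : FiniteDimensional ℂ N :=
    LinearEquiv.finiteDimensional (Submodule.equivMapOfInjective K.subtype
      (Submodule.injective_subtype K) N')
  have hsupN : LinearMap.range (A : X →ₗ[ℂ] Y) ⊔ N = LinearMap.ker (B : Y →ₗ[ℂ] Z) := by
    apply le_antisymm
    · exact sup_le hAB (Submodule.map_subtype_le K N')
    · intro y hy
      have : (⟨y, hy⟩ : K) ∈ R' ⊔ N' := by rw [hN'.sup_eq_top]; trivial
      obtain ⟨r, hr, n, hn, hrn⟩ := Submodule.mem_sup.1 this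
      refine Submodule.mem_sup.2 ⟨(r : Y), hr, (n : Y), Submodule.mem_map_of_mem hn, ?_⟩
      have := congrArg (Subtype.val : K → Y) hrn
      simpa using this
  -- finite dimensionality of the quotient
  have hfd : FiniteDimensional ℂ
      (@HasQuotient.Quotient ↥(LinearMap.ker (dualOp A : StrongDual ℂ Y →ₗ[ℂ] StrongDual ℂ X))
        (Submodule ℂ ↥(LinearMap.ker (dualOp A : StrongDual ℂ Y →ₗ[ℂ] StrongDual ℂ X)))
        (@Submodule.hasQuotient ℂ ↥(LinearMap.ker (dualOp A : StrongDual ℂ Y →ₗ[ℂ] StrongDual ℂ X)) _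
          (LinearMap.ker (dualOp A : StrongDual ℂ Y →ₗ[ℂ] StrongDual ℂ X)).addCommGroup _)
        (Submodule.comap (LinearMap.ker (dualOp A : StrongDual ℂ Y →ₗ[ℂ] StrongDual ℂ X)).subtype (LinearMap.range (dualOp B : StrongDual ℂ Z →ₗ[ℂ] StrongDual ℂ Y)))) := by
    let φ : ↥(LinearMap.ker (dualOp A : StrongDual ℂ Y →ₗ[ℂ] StrongDual ℂ X)) →ₗ[ℂ] (N →ₗ[ℂ] ℂ) :=
      { toFun := fun g => ((g : StrongDual ℂ Y) : Y →ₗ[ℂ] ℂ).domRestrict N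
        map_add' := by intros; ext; simp
        map_smul' := by intros; ext; simp }
    have hkerφ : Submodule.comap (LinearMap.ker (dualOp A : StrongDual ℂ Y →ₗ[ℂ] StrongDual ℂ X)).subtype
        (LinearMap.range (dualOp B : StrongDual ℂ Z →ₗ[ℂ] StrongDual ℂ Y)) = LinearMap.ker φ := by
      ext g
      rw [Submodule.mem_comap, LinearMap.mem_ker]
      have h4 := hpart4 N hsupN (g : StrongDual ℂ Y)
      rw [show (LinearMap.ker (dualOp A : StrongDual ℂ Y →ₗ[ℂ] StrongDual ℂ X)).subtype g = (g : StrongDual ℂ Y) from rfl, h4]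
      constructor
      · rintro ⟨-, hv⟩
        ext n
        exact hv n n.2
      · intro h
        refine ⟨g.2, fun n hn => ?_⟩
        have := congrFun (congrArg DFunLike.coe h) ⟨n, hn⟩
        simpa [φ] using this
    haveI : FiniteDimensional ℂ (N →ₗ[ℂ] ℂ) := by infer_instance
    haveI : FiniteDimensional ℂ (LinearMap.range φ) := inferInstance
    rw [hkerφ]
    letI : AddCommGroup ↥(LinearMap.ker (dualOp A : StrongDual ℂ Y →ₗ[ℂ] StrongDual ℂ X)) :=
      (LinearMap.ker (dualOp A : StrongDual ℂ Y →ₗ[ℂ] StrongDual ℂ X)).addCommGroup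
    have hq := LinearEquiv.finiteDimensional (LinearMap.quotKerEquivRange φ).symm
    exact hq
  exact ⟨hclosed', hsub, hfd, fun N _ _ hsup g => hpart4 N hsup g⟩
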